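/- (Piecewise affinity of the premium, deterministic case.) For any n ≥ 1 and real payoffs v_0,…,v_{n-1}, the value function Q ↦ P(Q) is continuous and affine on each triangle T⁺_{ij} (0 ≤ i ≤ j ≤ n-1) and T⁻_{ij} (0 ≤ i < j ≤ n-1) of the standard triangular tiling of T⁺(n). -/

import Mathlib

/-- Value function of the normalized swing contract with deterministic payoffs. -/
noncomputable def swingVal (n : ℕ) (v : ℕ → ℝ) (a b : ℝ) : ℝ :=
  sSup {r : ℝ | ∃ q : ℕ → ℝ, (∀ k < n, q k ∈ Set.Icc (0:ℝ) 1) ∧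
    (∑ k ∈ Finset.range n, q k) ∈ Set.Icc a b ∧
    r = ∑ k ∈ Finset.range n, q k * v k}

/-- The admissible triangle `T⁺(n)`. -/
def Tplus (n : ℕ) : Set (ℝ × ℝ) := {p | 0 ≤ p.1 ∧ p.1 ≤ p.2 ∧ p.2 ≤ n}

/-- Upper triangle `T⁺_{ij}`. -/
def TplusTile (i j : ℕ) : Set (ℝ × ℝ) :=
  {p | (i:ℝ) ≤ p.1 ∧ p.1 ≤ i + 1 ∧ (j:ℝ) ≤ p.2 ∧ p.2 ≤ j + 1 ∧ p.2 ≥ p.1 + j - i}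

/-- Lower triangle `T⁻_{ij}`. -/
def TminusTile (i j : ℕ) : Set (ℝ × ℝ) :=
  {p | (i:ℝ) ≤ p.1 ∧ p.1 ≤ i + 1 ∧ (j:ℝ) ≤ p.2 ∧ p.2 ≤ j + 1 ∧ p.2 ≤ p.1 + j - i}

open Finset

namespace SwingAux

variable (n : ℕ) (v : ℕ → ℝ)

/-- the feasible-value set -/
def F (a b : ℝ) : Set ℝ := {r : ℝ | ∃ q : ℕ → ℝ, (∀ k < n, q k ∈ Set.Icc (0:ℝ) 1) ∧
    (∑ k ∈ Finset.range n, q k) ∈ Set.Icc a b ∧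
    r = ∑ k ∈ Finset.range n, q k * v k}

noncomputable def M : ℝ := ∑ k ∈ range n, |v k|

lemma M_nonneg : 0 ≤ M n v := Finset.sum_nonneg fun _ _ => abs_nonneg _

lemma abs_v_le {k : ℕ} (hk : k < n) : |v k| ≤ M n v :=
  Finset.single_le_sum (f := fun k => |v k|) (fun _ _ => abs_nonneg _) (mem_range.2 hk)

lemma bddAbove_F (a b : ℝ) : BddAbove (F n v a b) := by
  refine ⟨M n v, ?_⟩
  rintro r ⟨q, hq, -, rfl⟩
  calc ∑ k ∈ range n, q k * v k ≤ ∑ k ∈ range n, |v k| := by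
        refine Finset.sum_le_sum fun k hk => ?_
        obtain ⟨h0, h1⟩ := hq k (mem_range.1 hk)
        calc q k * v k ≤ |q k * v k| := le_abs_self _
          _ = |q k| * |v k| := abs_mul _ _
          _ ≤ 1 * |v k| := by
              have : |q k| = q k := abs_of_nonneg h0
              nlinarith [abs_nonneg (v k)]
          _ = |v k| := one_mul _
    _ = M n v := rfl

lemma mem_F {a b : ℝ} {q : ℕ → ℝ} (hq : ∀ k < n, q k ∈ Set.Icc (0:ℝ) 1)
    (hs : (∑ k ∈ Finset.range n, q k) ∈ Set.Icc a b) :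
    (∑ k ∈ Finset.range n, q k * v k) ∈ F n v a b := ⟨q, hq, hs, rfl⟩

lemma nonempty_F (hn : 1 ≤ n) {a b : ℝ} (ha : 0 ≤ a) (hab : a ≤ b) (han : a ≤ n) :
    (F n v a b).Nonempty := by
  have hnpos : (0:ℝ) < n := by exact_mod_cast hn
  refine ⟨_, mem_F n v (q := fun _ => a / n) (fun k _ => ?_) ?_⟩
  · constructor
    · positivity
    · rw [div_le_one hnpos]; exact han
  · rw [Finset.sum_const, card_range, nsmul_eq_mul, mul_div_cancel₀ _ (ne_of_gt hnpos)]
    exact ⟨le_refl a, hab⟩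

end SwingAux
namespace SwingAux

noncomputable def sg (n : ℕ) (v : ℕ → ℝ) : Equiv.Perm (Fin n) := Tuple.sort (fun k : Fin n => -v k)

noncomputable def w (n : ℕ) (v : ℕ → ℝ) : ℕ → ℝ := fun m => if h : m < n then v (sg n v ⟨m, h⟩) else 0

noncomputable def Sm (n : ℕ) (v : ℕ → ℝ) : ℕ → ℝ := fun m => ∑ k ∈ Finset.range m, w n v k

lemma w_anti (n : ℕ) (v : ℕ → ℝ) {m m' : ℕ} (h : m ≤ m') (h' : m' < n) : w n v m' ≤ w n v m := by
  have hm : m < n := lt_of_le_of_lt h h'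
  simp only [w, dif_pos hm, dif_pos h']
  have := Tuple.monotone_sort (fun k : Fin n => -v k)
    (a := ⟨m, hm⟩) (b := ⟨m', h'⟩) (Fin.mk_le_mk.2 h)
  simp only [Function.comp_apply] at this
  have : -v ((sg n v) ⟨m, hm⟩) ≤ -v ((sg n v) ⟨m', h'⟩) := this
  linarith

lemma sum_comp_w (n : ℕ) (v : ℕ → ℝ) (F : ℝ → ℝ) :
    ∑ k ∈ range n, F (v k) = ∑ m ∈ range n, F (w n v m) := by
  rw [← Fin.sum_univ_eq_sum_range (fun k => F (v k)) n,
      ← Fin.sum_univ_eq_sum_range (fun m => F (w n v m)) n]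
  rw [← Equiv.sum_comp (sg n v) (fun k : Fin n => F (v k))]
  refine Finset.sum_congr rfl fun l _ => ?_
  simp only [w, l.isLt, dif_pos, Fin.eta]

lemma UB (n : ℕ) (v : ℕ → ℝ) {q : ℕ → ℝ} (hq : ∀ k < n, q k ∈ Set.Icc (0:ℝ) 1)
    {m : ℕ} (hm : m < n) :
    ∑ k ∈ range n, q k * v k ≤ Sm n v m + (∑ k ∈ range n, q k - m) * w n v m := by
  set c := w n v m with hc
  have h1 : ∑ k ∈ range n, q k * v k
      = ∑ k ∈ range n, q k * (v k - c) + (∑ k ∈ range n, q k) * c := by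
    rw [Finset.sum_mul, ← Finset.sum_add_distrib]
    exact Finset.sum_congr rfl fun k _ => by ring
  have h2 : ∑ k ∈ range n, q k * (v k - c) ≤ ∑ k ∈ range n, max 0 (v k - c) := by
    refine Finset.sum_le_sum fun k hk => ?_
    obtain ⟨h0, h1'⟩ := hq k (mem_range.1 hk)
    rcases le_or_gt 0 (v k - c) with h | h
    · calc q k * (v k - c) ≤ 1 * (v k - c) := mul_le_mul_of_nonneg_right h1' h
        _ ≤ max 0 (v k - c) := by rw [one_mul]; exact le_max_right _ _
    · nlinarith [le_max_left 0 (v k - c)]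
  have h3 : ∑ k ∈ range n, max 0 (v k - c) = ∑ k ∈ range n, max 0 (w n v k - c) :=
    sum_comp_w n v (fun x => max 0 (x - c))
  have h4 : ∑ k ∈ range n, max 0 (w n v k - c) = Sm n v m - m * c := by
    rw [← Finset.sum_range_add_sum_Ico _ (le_of_lt hm)]
    have ha : ∑ k ∈ range m, max 0 (w n v k - c) = ∑ k ∈ range m, (w n v k - c) := by
      refine Finset.sum_congr rfl fun k hk => ?_
      have : c ≤ w n v k := w_anti n v (le_of_lt (mem_range.1 hk)) hm
      exact max_eq_right (by linarith)
    have hb : ∑ k ∈ Ico m n, max 0 (w n v k - c) = 0 := by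
      refine Finset.sum_eq_zero fun k hk => ?_
      obtain ⟨hk1, hk2⟩ := mem_Ico.1 hk
      have : w n v k ≤ c := w_anti n v hk1 hk2
      exact max_eq_left (by linarith)
    rw [ha, hb, Finset.sum_sub_distrib, Finset.sum_const, card_range]
    simp only [Sm, nsmul_eq_mul, add_zero]
  nlinarith [h1, h2, h3, h4]

end SwingAux
namespace SwingAux

lemma sum_indicator (g : ℕ → ℝ) {n m : ℕ} (hm : m < n) (t : ℝ) :
    ∑ k ∈ range n, (if k < m then (1:ℝ) else if k = m then t else 0) * g k
      = ∑ k ∈ range m, g k + t * g m := by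
  have hsub : range (m+1) ⊆ range n := Finset.range_subset_range.2 hm
  rw [← Finset.sum_subset hsub (fun k _ hk2 => ?_)]
  · rw [Finset.sum_range_succ]
    have : ∀ k ∈ range m, (if k < m then (1:ℝ) else if k = m then t else 0) * g k = g k :=
      fun k hk => by rw [if_pos (mem_range.1 hk), one_mul]
    rw [Finset.sum_congr rfl this, if_neg (lt_irrefl m), if_pos rfl]
  · have h1 : ¬ k < m := fun h => hk2 (mem_range.2 (h.trans m.lt_succ_self))
    have h2 : k ≠ m := fun h => hk2 (mem_range.2 (h ▸ m.lt_succ_self))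
    rw [if_neg h1, if_neg h2, zero_mul]

lemma ACH (n : ℕ) (v : ℕ → ℝ) {m : ℕ} (hm : m < n) {t : ℝ} (ht0 : 0 ≤ t) (ht1 : t ≤ 1) :
    ∃ q : ℕ → ℝ, (∀ k < n, q k ∈ Set.Icc (0:ℝ) 1) ∧ (∑ k ∈ range n, q k) = m + t ∧
      (∑ k ∈ range n, q k * v k) = Sm n v m + t * w n v m := by
  classical
  set σ := sg n v with hσ
  refine ⟨fun k => if h : k < n then
      (if ((σ.symm ⟨k, h⟩ : Fin n) : ℕ) < m then 1 else if ((σ.symm ⟨k, h⟩ : Fin n) : ℕ) = m then t else 0)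
      else 0, fun k hk => ?_, ?_, ?_⟩
  · simp only
    rw [dif_pos hk]
    split_ifs with h1 h2
    · exact ⟨zero_le_one, le_refl 1⟩
    · exact ⟨ht0, ht1⟩
    · exact ⟨le_refl 0, zero_le_one⟩
  · rw [← Fin.sum_univ_eq_sum_range (fun k => if h : k < n then
      (if ((σ.symm ⟨k, h⟩ : Fin n) : ℕ) < m then (1:ℝ) else if ((σ.symm ⟨k, h⟩ : Fin n) : ℕ) = m then t else 0)
      else 0) n]
    rw [← Equiv.sum_comp σ]
    have : ∀ l : Fin n, (fun l' : Fin n => if h : (l' : ℕ) < n then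
        (if ((σ.symm ⟨(l' : ℕ), h⟩ : Fin n) : ℕ) < m then (1:ℝ) else if ((σ.symm ⟨(l' : ℕ), h⟩ : Fin n) : ℕ) = m then t else 0)
        else 0) (σ l) = (if (l : ℕ) < m then (1:ℝ) else if (l : ℕ) = m then t else 0) := by
      intro l
      simp only [(σ l).isLt, dif_pos, Fin.eta, Equiv.symm_apply_apply]
    rw [Finset.sum_congr rfl (fun l _ => this l),
      Fin.sum_univ_eq_sum_range (fun l => if l < m then (1:ℝ) else if l = m then t else 0) n]
    have := sum_indicator (fun _ => (1:ℝ)) hm t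
    simpa using this
  · rw [← Fin.sum_univ_eq_sum_range (fun k => (if h : k < n then
      (if ((σ.symm ⟨k, h⟩ : Fin n) : ℕ) < m then (1:ℝ) else if ((σ.symm ⟨k, h⟩ : Fin n) : ℕ) = m then t else 0)
      else 0) * v k) n]
    rw [← Equiv.sum_comp σ]
    have : ∀ l : Fin n, (fun l' : Fin n => (if h : (l' : ℕ) < n then
        (if ((σ.symm ⟨(l' : ℕ), h⟩ : Fin n) : ℕ) < m then (1:ℝ) else if ((σ.symm ⟨(l' : ℕ), h⟩ : Fin n) : ℕ) = m then t else 0)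
        else 0) * v (l' : ℕ)) (σ l)
        = (if (l : ℕ) < m then (1:ℝ) else if (l : ℕ) = m then t else 0) * w n v (l : ℕ) := by
      intro l
      simp only [(σ l).isLt, dif_pos, Fin.eta, Equiv.symm_apply_apply, w, l.isLt, hσ, ((sg n v) l).isLt]
    rw [Finset.sum_congr rfl (fun l _ => this l),
      Fin.sum_univ_eq_sum_range (fun l => (if l < m then (1:ℝ) else if l = m then t else 0) * w n v l) n]
    exact sum_indicator (w n v) hm t

end SwingAux
namespace SwingAux

lemma tile (n : ℕ) (v : ℕ → ℝ) {i j : ℕ} (hij : i ≤ j) (hj : j < n) :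
    ∃ A B C : ℝ, ∀ a b : ℝ, (i:ℝ) ≤ a → a ≤ i+1 → (j:ℝ) ≤ b → b ≤ j+1 → a ≤ b →
      sSup (F n v a b) = A * a + B * b + C := by
  classical
  have hi : i < n := lt_of_le_of_lt hij hj
  rcases le_or_gt 0 (w n v j) with hwj | hwj
  · -- increasing at j : optimum at b
    refine ⟨0, w n v j, Sm n v j - j * w n v j, fun a b ha1 ha2 hb1 hb2 hab => ?_⟩
    obtain ⟨q, hq, hqs, hqv⟩ := ACH n v hj (t := b - j) (by linarith) (by linarith)
    have hqb : (∑ k ∈ range n, q k) = b := by rw [hqs]; ring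
    have hmem : (Sm n v j + (b - j) * w n v j) ∈ F n v a b := by
      rw [← hqv]; exact mem_F n v hq (by rw [hqb]; exact ⟨hab, le_refl b⟩)
    have : sSup (F n v a b) = Sm n v j + (b - j) * w n v j := by
      refine le_antisymm (csSup_le ⟨_, hmem⟩ ?_) (le_csSup (bddAbove_F n v a b) hmem)
      rintro r ⟨q', hq', hs', rfl⟩
      have := UB n v hq' hj
      nlinarith [hs'.2]
    rw [this]; ring
  · rcases le_or_gt (w n v i) 0 with hwi | hwi
    · -- decreasing at i : optimum at a
      refine ⟨w n v i, 0, Sm n v i - i * w n v i, fun a b ha1 ha2 hb1 hb2 hab => ?_⟩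
      obtain ⟨q, hq, hqs, hqv⟩ := ACH n v hi (t := a - i) (by linarith) (by linarith)
      have hqa : (∑ k ∈ range n, q k) = a := by rw [hqs]; ring
      have hmem : (Sm n v i + (a - i) * w n v i) ∈ F n v a b := by
        rw [← hqv]; exact mem_F n v hq (by rw [hqa]; exact ⟨le_refl a, hab⟩)
      have : sSup (F n v a b) = Sm n v i + (a - i) * w n v i := by
        refine le_antisymm (csSup_le ⟨_, hmem⟩ ?_) (le_csSup (bddAbove_F n v a b) hmem)
        rintro r ⟨q', hq', hs', rfl⟩
        have := UB n v hq' hi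
        nlinarith [hs'.1]
      rw [this]; ring
    · -- interior maximum
      have hex : ∃ m, w n v m < 0 := ⟨j, hwj⟩
      set m' := Nat.find hex with hm'def
      have hwm' : w n v m' < 0 := Nat.find_spec hex
      have hm'j : m' ≤ j := Nat.find_min' hex hwj
      have hm'n : m' < n := lt_of_le_of_lt hm'j hj
      have him' : i < m' := by
        by_contra h
        push_neg at h
        have := w_anti n v h hi
        linarith
      have hm'pos : 1 ≤ m' := by omega
      refine ⟨0, 0, Sm n v m', fun a b ha1 ha2 hb1 hb2 hab => ?_⟩
      obtain ⟨q, hq, hqs, hqv⟩ := ACH n v hm'n (t := 0) (le_refl 0) zero_le_one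
      have hqm : (∑ k ∈ range n, q k) = m' := by rw [hqs]; ring
      have ham' : a ≤ (m' : ℝ) := by
        have : ((i:ℕ) : ℝ) + 1 ≤ (m' : ℝ) := by exact_mod_cast him'
        linarith
      have hm'b : (m' : ℝ) ≤ b := by
        have : ((m' : ℕ) : ℝ) ≤ (j : ℝ) := by exact_mod_cast hm'j
        linarith
      have hmem : (Sm n v m') ∈ F n v a b := by
        have : Sm n v m' = Sm n v m' + 0 * w n v m' := by ring
        rw [this, ← hqv]
        exact mem_F n v hq (by rw [hqm]; exact ⟨ham', hm'b⟩)
      have : sSup (F n v a b) = Sm n v m' := by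
        refine le_antisymm (csSup_le ⟨_, hmem⟩ ?_) (le_csSup (bddAbove_F n v a b) hmem)
        rintro r ⟨q', hq', hs', rfl⟩
        rcases le_or_gt (m' : ℝ) (∑ k ∈ range n, q' k) with hQ | hQ
        · have := UB n v hq' hm'n
          nlinarith
        · obtain ⟨m0, hm0⟩ : ∃ m0, m' = m0 + 1 := ⟨m' - 1, (Nat.succ_pred_eq_of_pos hm'pos).symm⟩
          have hm0n : m0 < n := by omega
          have hwm0 : 0 ≤ w n v m0 := le_of_not_gt (Nat.find_min hex (by omega))
          have hSm : Sm n v m' = Sm n v m0 + w n v m0 := by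
            rw [hm0, Sm]; exact Finset.sum_range_succ _ _
          have hQ1 : (∑ k ∈ range n, q' k) - m0 ≤ 1 := by
            have : (m' : ℝ) = (m0 : ℝ) + 1 := by exact_mod_cast hm0
            linarith
          have := UB n v hq' hm0n
          nlinarith
      rw [this]; ring

end SwingAux
namespace SwingAux

lemma sum_q_nonneg (n : ℕ) {q : ℕ → ℝ} (hq : ∀ k < n, q k ∈ Set.Icc (0:ℝ) 1) :
    0 ≤ ∑ k ∈ range n, q k :=
  Finset.sum_nonneg fun k hk => (hq k (mem_range.1 hk)).1

lemma sum_q_le (n : ℕ) {q : ℕ → ℝ} (hq : ∀ k < n, q k ∈ Set.Icc (0:ℝ) 1) :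
    (∑ k ∈ range n, q k) ≤ n := by
  calc (∑ k ∈ range n, q k) ≤ ∑ k ∈ range n, 1 :=
        Finset.sum_le_sum fun k hk => (hq k (mem_range.1 hk)).2
    _ = n := by simp

lemma MOVE (n : ℕ) (v : ℕ → ℝ) {q : ℕ → ℝ} (hq : ∀ k < n, q k ∈ Set.Icc (0:ℝ) 1)
    {Q' : ℝ} (h0 : 0 ≤ Q') (hQn : Q' ≤ n) :
    ∃ q' : ℕ → ℝ, (∀ k < n, q' k ∈ Set.Icc (0:ℝ) 1) ∧ (∑ k ∈ range n, q' k) = Q' ∧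
      |(∑ k ∈ range n, q' k * v k) - ∑ k ∈ range n, q k * v k|
        ≤ M n v * |Q' - ∑ k ∈ range n, q k| := by
  set Q := ∑ k ∈ range n, q k with hQdef
  have hQ0 : 0 ≤ Q := sum_q_nonneg n hq
  have hQle : Q ≤ n := sum_q_le n hq
  rcases le_or_gt Q' Q with hle | hlt
  · -- scale down
    rcases eq_or_lt_of_le hQ0 with hQ0' | hQ0'
    · refine ⟨q, hq, ?_, ?_⟩
      · have : Q' = Q := le_antisymm (hle) (hQ0' ▸ h0)
        rw [← hQdef, ← this]
      · have : Q' = Q := le_antisymm (hle) (hQ0' ▸ h0)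
        rw [this]
        simp [M_nonneg n v, abs_nonneg, mul_nonneg]
    · have hθ0 : 0 ≤ Q' / Q := div_nonneg h0 hQ0'.le
      have hθ1 : Q' / Q ≤ 1 := (div_le_one hQ0').2 hle
      refine ⟨fun k => (Q' / Q) * q k, fun k hk => ?_, ?_, ?_⟩
      · obtain ⟨hk0, hk1⟩ := hq k hk
        exact ⟨mul_nonneg hθ0 hk0, by nlinarith⟩
      · rw [← Finset.mul_sum, ← hQdef, div_mul_cancel₀ _ (ne_of_gt hQ0')]
      · have h1 : (∑ k ∈ range n, (Q' / Q) * q k * v k) - ∑ k ∈ range n, q k * v k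
            = (Q' / Q - 1) * ∑ k ∈ range n, q k * v k := by
          rw [sub_one_mul, Finset.mul_sum]
          congr 1
          exact Finset.sum_congr rfl fun k _ => by ring
        have h2 : |∑ k ∈ range n, q k * v k| ≤ M n v * Q := by
          calc |∑ k ∈ range n, q k * v k| ≤ ∑ k ∈ range n, |q k * v k| :=
                Finset.abs_sum_le_sum_abs _ _
            _ ≤ ∑ k ∈ range n, q k * M n v := by
                refine Finset.sum_le_sum fun k hk => ?_
                obtain ⟨hk0, _⟩ := hq k (mem_range.1 hk)
                rw [abs_mul, abs_of_nonneg hk0]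
                exact mul_le_mul_of_nonneg_left (abs_v_le n v (mem_range.1 hk)) hk0
            _ = M n v * Q := by rw [← Finset.sum_mul, ← hQdef]; ring
        rw [h1, abs_mul]
        have h3 : |Q' / Q - 1| = (Q - Q') / Q := by
          rw [abs_of_nonpos (by linarith)]
          field_simp; ring
        have h4 : |Q' - Q| = Q - Q' := by rw [abs_of_nonpos (by linarith)]; ring
        rw [h3, h4]
        rw [div_mul_eq_mul_div, div_le_iff₀ hQ0']
        nlinarith [abs_nonneg (∑ k ∈ range n, q k * v k), M_nonneg n v]
  · -- scale up
    have hQn' : Q < n := lt_of_lt_of_le hlt hQn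
    have hden : (0:ℝ) < (n:ℝ) - Q := by linarith
    set θ := (Q' - Q) / ((n:ℝ) - Q) with hθdef
    have hθ0 : 0 ≤ θ := div_nonneg (by linarith) hden.le
    have hθ1 : θ ≤ 1 := (div_le_one hden).2 (by linarith)
    have hsum1 : ∑ k ∈ range n, (1 - q k) = (n:ℝ) - Q := by
      rw [Finset.sum_sub_distrib, Finset.sum_const, card_range, ← hQdef]
      simp
    refine ⟨fun k => q k + θ * (1 - q k), fun k hk => ?_, ?_, ?_⟩
    · obtain ⟨hk0, hk1⟩ := hq k hk
      constructor
      · show 0 ≤ q k + θ * (1 - q k)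
        nlinarith
      · show q k + θ * (1 - q k) ≤ 1
        nlinarith
    · rw [Finset.sum_add_distrib, ← Finset.mul_sum, hsum1, ← hQdef, hθdef]
      field_simp; ring
    · have h1 : (∑ k ∈ range n, (q k + θ * (1 - q k)) * v k) - ∑ k ∈ range n, q k * v k
          = θ * ∑ k ∈ range n, (1 - q k) * v k := by
        rw [Finset.mul_sum, ← Finset.sum_sub_distrib]
        exact Finset.sum_congr rfl fun k _ => by ring
      have h2 : |∑ k ∈ range n, (1 - q k) * v k| ≤ M n v * ((n:ℝ) - Q) := by
        calc |∑ k ∈ range n, (1 - q k) * v k| ≤ ∑ k ∈ range n, |(1 - q k) * v k| :=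
              Finset.abs_sum_le_sum_abs _ _
          _ ≤ ∑ k ∈ range n, (1 - q k) * M n v := by
              refine Finset.sum_le_sum fun k hk => ?_
              obtain ⟨_, hk1⟩ := hq k (mem_range.1 hk)
              rw [abs_mul, abs_of_nonneg (by linarith)]
              exact mul_le_mul_of_nonneg_left (abs_v_le n v (mem_range.1 hk)) (by linarith)
          _ = M n v * ((n:ℝ) - Q) := by rw [← Finset.sum_mul, hsum1]; ring
      rw [h1, abs_mul, abs_of_nonneg hθ0]
      have h4 : |Q' - Q| = Q' - Q := abs_of_nonneg (by linarith)
      rw [h4, hθdef]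
      calc (Q' - Q) / ((n:ℝ) - Q) * |∑ k ∈ range n, (1 - q k) * v k|
          ≤ (Q' - Q) / ((n:ℝ) - Q) * (M n v * ((n:ℝ) - Q)) := by
            exact mul_le_mul_of_nonneg_left h2 (div_nonneg (by linarith) hden.le)
        _ = M n v * (Q' - Q) := by field_simp
end SwingAux
namespace SwingAux

lemma lip (n : ℕ) (hn1 : 1 ≤ n) (v : ℕ → ℝ) {a b a' b' : ℝ}
    (ha : 0 ≤ a) (hab : a ≤ b) (hbn : b ≤ n)
    (ha' : 0 ≤ a') (hab' : a' ≤ b') (hbn' : b' ≤ n) :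
    sSup (F n v a b) ≤ sSup (F n v a' b') + M n v * (|a - a'| + |b - b'|) := by
  refine csSup_le (nonempty_F n v hn1 ha hab (hab.trans hbn)) ?_
  rintro r ⟨q, hq, hs, rfl⟩
  set Q := ∑ k ∈ range n, q k with hQdef
  have hQ0 : 0 ≤ Q := sum_q_nonneg n hq
  have hQn : Q ≤ n := sum_q_le n hq
  set Q' := max a' (min b' Q) with hQ'def
  have hQ'a : a' ≤ Q' := le_max_left _ _
  have hQ'b : Q' ≤ b' := max_le hab' (min_le_left _ _)
  have hQ'0 : 0 ≤ Q' := ha'.trans hQ'a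
  have hQ'n : Q' ≤ n := hQ'b.trans hbn'
  have hdist : |Q' - Q| ≤ |a - a'| + |b - b'| := by
    have hxa := abs_nonneg (a - a')
    have hxb := abs_nonneg (b - b')
    rcases le_total a' Q with h1 | h1
    · rcases le_total Q b' with h2 | h2
      · have hQQ : Q' = Q := by rw [hQ'def, min_eq_right h2, max_eq_right h1]
        rw [hQQ, sub_self, abs_zero]; linarith
      · have hQQ : Q' = b' := by rw [hQ'def, min_eq_left h2, max_eq_right hab']
        have h3 : |Q' - Q| = Q - b' := by rw [hQQ, abs_of_nonpos (by linarith)]; ring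
        have h4 : b - b' ≤ |b - b'| := le_abs_self _
        have h5 : Q ≤ b := hs.2
        linarith
    · have hQb' : Q ≤ b' := h1.trans hab'
      have hQQ : Q' = a' := by rw [hQ'def, min_eq_right hQb', max_eq_left h1]
      have h3 : |Q' - Q| = a' - Q := by rw [hQQ, abs_of_nonneg (by linarith)]
      have h4 : a' - a ≤ |a - a'| := by rw [abs_sub_comm]; exact le_abs_self _
      have h5 : a ≤ Q := hs.1
      linarith
  obtain ⟨q', hq', hs', hd⟩ := MOVE n v hq hQ'0 hQ'n
  have hmem' : (∑ k ∈ range n, q' k * v k) ∈ F n v a' b' :=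
    mem_F n v hq' (by rw [hs']; exact ⟨hQ'a, hQ'b⟩)
  have hle := le_csSup (bddAbove_F n v a' b') hmem'
  have hM := M_nonneg n v
  have h6 := (abs_le.1 hd).1
  have h7 : M n v * |Q' - Q| ≤ M n v * (|a - a'| + |b - b'|) :=
    mul_le_mul_of_nonneg_left hdist hM
  linarith

lemma cont (n : ℕ) (hn1 : 1 ≤ n) (v : ℕ → ℝ) :
    ContinuousOn (fun p : ℝ × ℝ => sSup (F n v p.1 p.2)) {p : ℝ × ℝ | 0 ≤ p.1 ∧ p.1 ≤ p.2 ∧ p.2 ≤ n} := by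
  refine LipschitzOnWith.continuousOn (K := (⟨2 * M n v, by have := M_nonneg n v; positivity⟩ : NNReal)) ?_
  refine LipschitzOnWith.of_dist_le_mul ?_
  rintro ⟨a, b⟩ ⟨ha0, hab, hbn⟩ ⟨a', b'⟩ ⟨ha0', hab', hbn'⟩
  simp only [NNReal.coe_mk]
  have h1 := lip n hn1 v ha0 hab hbn ha0' hab' hbn'
  have h2 := lip n hn1 v ha0' hab' hbn' ha0 hab hbn
  have hM := M_nonneg n v
  have hda : |a - a'| = dist a a' := (Real.dist_eq a a').symm
  have hdb : |b - b'| = dist b b' := (Real.dist_eq b b').symm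
  have hdp : dist ((a, b) : ℝ × ℝ) (a', b') = max (dist a a') (dist b b') := Prod.dist_eq
  have hla : dist a a' ≤ dist ((a, b) : ℝ × ℝ) (a', b') := by rw [hdp]; exact le_max_left _ _
  have hlb : dist b b' ≤ dist ((a, b) : ℝ × ℝ) (a', b') := by rw [hdp]; exact le_max_right _ _
  rw [Real.dist_eq]
  rw [abs_sub_comm a' a, abs_sub_comm b' b] at h2
  have habs : |sSup (F n v a b) - sSup (F n v a' b')| ≤ M n v * (|a - a'| + |b - b'|) :=
    abs_sub_le_iff.2 ⟨by linarith, by linarith⟩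
  calc |sSup (F n v a b) - sSup (F n v a' b')| ≤ M n v * (|a - a'| + |b - b'|) := habs
    _ ≤ 2 * M n v * dist ((a, b) : ℝ × ℝ) (a', b') := by
        rw [hda, hdb]; nlinarith [dist_nonneg (x := ((a,b):ℝ×ℝ)) (y := (a',b'))]

end SwingAux


theorem swingVal_piecewise_affine (n : ℕ) (hn : 1 ≤ n) (v : ℕ → ℝ) :
    ContinuousOn (fun p : ℝ × ℝ => swingVal n v p.1 p.2) (Tplus n) ∧
    (∀ i j : ℕ, i ≤ j → j ≤ n - 1 →
      ∃ a b c : ℝ, ∀ p ∈ TplusTile i j, swingVal n v p.1 p.2 = a * p.1 + b * p.2 + c) ∧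
    (∀ i j : ℕ, i < j → j ≤ n - 1 →
      ∃ a b c : ℝ, ∀ p ∈ TminusTile i j, swingVal n v p.1 p.2 = a * p.1 + b * p.2 + c) := by
  refine ⟨SwingAux.cont n hn v, ?_, ?_⟩
  · intro i j hij hjn
    have hj : j < n := by omega
    obtain ⟨A, B, C, h⟩ := SwingAux.tile n v hij hj
    refine ⟨A, B, C, fun p hp => ?_⟩
    obtain ⟨h1, h2, h3, h4, h5⟩ := hp
    have hijr : (i:ℝ) ≤ j := by exact_mod_cast hij
    exact h p.1 p.2 h1 h2 h3 h4 (by linarith)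
  · intro i j hij hjn
    have hj : j < n := by omega
    obtain ⟨A, B, C, h⟩ := SwingAux.tile n v (le_of_lt hij) hj
    refine ⟨A, B, C, fun p hp => ?_⟩
    obtain ⟨h1, h2, h3, h4, h5⟩ := hp
    have hijr : ((i:ℝ) + 1) ≤ j := by exact_mod_cast hij
    exact h p.1 p.2 h1 h2 h3 h4 (by linarith)
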